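/- In the hyperbolic plane, realized as the upper half-plane ℍ = {z ∈ ℂ : Im z > 0} with the hyperbolic distance dist(z,w) = arcosh(1 + |z−w|²/(2·Im z·Im w)), every geodesic triangle is ln 3-thin: for any geodesic triangle in ℍ, every point on any one of its three sides lies within hyperbolic distance ln 3 of the union of the other two sides. -/

import Mathlib

set_option maxHeartbeats 1000000


/-- `γ` is a geodesic segment from `x` to `y`, parametrized by arclength on `[0, dist x y]`. -/
def IsGeodesicSegment {X : Type*} [MetricSpace X] (γ : ℝ → X) (x y : X) : Prop :=
  γ 0 = x ∧ γ (dist x y) = y ∧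
    ∀ s ∈ Set.Icc (0 : ℝ) (dist x y), ∀ t ∈ Set.Icc (0 : ℝ) (dist x y),
      dist (γ s) (γ t) = |s - t|

/-- `X` is `δ`-thin-hyperbolic: for every geodesic triangle, each point on any one of the
three sides lies within distance `δ` of the union of the other two sides. -/
def ThinTriangles (X : Type*) [MetricSpace X] (δ : ℝ) : Prop :=
  ∀ (a b c : X) (γab γbc γca : ℝ → X),
    IsGeodesicSegment γab a b → IsGeodesicSegment γbc b c → IsGeodesicSegment γca c a →
    (∀ s ∈ Set.Icc (0 : ℝ) (dist a b),
      Metric.infDist (γab s) (γbc '' Set.Icc 0 (dist b c) ∪ γca '' Set.Icc 0 (dist c a)) ≤ δ) ∧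
    (∀ s ∈ Set.Icc (0 : ℝ) (dist b c),
      Metric.infDist (γbc s) (γab '' Set.Icc 0 (dist a b) ∪ γca '' Set.Icc 0 (dist c a)) ≤ δ) ∧
    (∀ s ∈ Set.Icc (0 : ℝ) (dist c a),
      Metric.infDist (γca s) (γab '' Set.Icc 0 (dist a b) ∪ γbc '' Set.Icc 0 (dist b c)) ≤ δ)

noncomputable section
namespace HypThin
open Real

local notation "ℍ" => UpperHalfPlane

lemma den_pos {k : ℝ} (hk : k ^ 2 ≤ 1) (x : ℝ) : 0 < Real.cosh x - k * Real.sinh x := by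
  nlinarith [Real.cosh_sq x, Real.cosh_pos x, sq_nonneg (Real.sinh x - k * Real.cosh x),
    sq_nonneg (Real.sinh x + k * Real.cosh x), sq_nonneg (Real.sinh x)]

lemma sq_le_one {k κ : ℝ} (h : k ^ 2 + κ ^ 2 = 1) : k ^ 2 ≤ 1 := by nlinarith [sq_nonneg κ]

/-- The unit-speed geodesic through `i` with initial direction `(κ, k)` (Euclidean
direction at `i`), parametrized by arclength. -/
def zeta (k κ : ℝ) (h : k ^ 2 + κ ^ 2 = 1) (x : ℝ) : ℍ :=
  ⟨⟨κ * Real.sinh x / (Real.cosh x - k * Real.sinh x),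
    1 / (Real.cosh x - k * Real.sinh x)⟩, by
      simpa using one_div_pos.mpr (den_pos (sq_le_one h) x)⟩

@[simp] lemma zeta_re {k κ : ℝ} (h : k ^ 2 + κ ^ 2 = 1) (x : ℝ) :
    (zeta k κ h x).re = κ * Real.sinh x / (Real.cosh x - k * Real.sinh x) := rfl

@[simp] lemma zeta_im {k κ : ℝ} (h : k ^ 2 + κ ^ 2 = 1) (x : ℝ) :
    (zeta k κ h x).im = 1 / (Real.cosh x - k * Real.sinh x) := rfl

lemma zeta_zero {k κ : ℝ} (h : k ^ 2 + κ ^ 2 = 1) : zeta k κ h 0 = UpperHalfPlane.I := by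
  apply UpperHalfPlane.ext
  apply Complex.ext <;> simp [zeta, UpperHalfPlane.I]

/-- Hyperbolic law of cosines along two geodesics through `i`. -/
lemma cosh_dist_zeta {j ι k κ : ℝ} (hj : j ^ 2 + ι ^ 2 = 1) (hk : k ^ 2 + κ ^ 2 = 1)
    (y x : ℝ) :
    Real.cosh (dist (zeta j ι hj y) (zeta k κ hk x)) =
      Real.cosh y * Real.cosh x - (j * k + ι * κ) * (Real.sinh y * Real.sinh x) := by
  have hdy := den_pos (sq_le_one hj) y
  have hdx := den_pos (sq_le_one hk) x
  have py := Real.cosh_sq y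
  have px := Real.cosh_sq x
  rw [UpperHalfPlane.cosh_dist']
  rw [zeta_re, zeta_re, zeta_im, zeta_im]
  set SY := Real.sinh y
  set SX := Real.sinh x
  set CY := Real.cosh y
  set CX := Real.cosh x
  set dy := CY - j * SY with hdy_def
  set dx := CX - k * SX with hdx_def
  rw [div_eq_iff (by positivity)]
  have h1 : dy ≠ 0 := ne_of_gt hdy
  have h2 : dx ≠ 0 := ne_of_gt hdx
  field_simp
  linear_combination (SY^2*dx^2 * hj + SX^2*dy^2 * hk - dx^2 * py - dy^2 * px)


lemma dist_zeta {k κ : ℝ} (h : k ^ 2 + κ ^ 2 = 1) (y x : ℝ) :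
    dist (zeta k κ h y) (zeta k κ h x) = |y - x| := by
  have h1 : Real.cosh (dist (zeta k κ h y) (zeta k κ h x)) = Real.cosh (y - x) := by
    rw [cosh_dist_zeta h h, Real.cosh_sub]
    linear_combination (- (Real.sinh y * Real.sinh x)) * h
  have h2 : |dist (zeta k κ h y) (zeta k κ h x)| = |y - x| := by
    exact le_antisymm (Real.cosh_le_cosh.mp (le_of_eq h1)) (Real.cosh_le_cosh.mp (ge_of_eq h1))
  rwa [abs_of_nonneg dist_nonneg] at h2

lemma dist_I_zeta {k κ : ℝ} (h : k ^ 2 + κ ^ 2 = 1) {x : ℝ} (hx : 0 ≤ x) :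
    dist UpperHalfPlane.I (zeta k κ h x) = x := by
  rw [← zeta_zero h, dist_zeta h 0 x]
  rw [zero_sub, abs_neg, abs_of_nonneg hx]

lemma exists_zeta (z : ℍ) :
    ∃ (k κ x : ℝ) (h : k ^ 2 + κ ^ 2 = 1), 0 ≤ x ∧ zeta k κ h x = z := by
  by_cases hz : z = UpperHalfPlane.I
  · exact ⟨1, 0, 0, by norm_num, le_refl 0, by rw [zeta_zero]; exact hz.symm⟩
  · set u := z.re with hu
    set v := z.im with hv
    have hv0 : 0 < v := z.im_pos
    set C : ℝ := (u ^ 2 + v ^ 2 + 1) / (2 * v) with hC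
    have hC1 : 1 ≤ C := by
      rw [hC, le_div_iff₀ (by positivity)]
      nlinarith [sq_nonneg u, sq_nonneg (v - 1)]
    set S : ℝ := Real.sqrt (C ^ 2 - 1) with hS
    have hS2 : S ^ 2 = C ^ 2 - 1 := Real.sq_sqrt (by nlinarith)
    have hSpos : 0 < S := by
      have hne : u ^ 2 + (v - 1) ^ 2 ≠ 0 := by
        intro h0
        apply hz
        have hu0 : u = 0 := by nlinarith [sq_nonneg u, sq_nonneg (v - 1)]
        have hv1 : v = 1 := by nlinarith [sq_nonneg u, sq_nonneg (v - 1)]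
        apply UpperHalfPlane.ext'
        · rw [show (UpperHalfPlane.I).re = 0 from rfl]; exact hu0
        · rw [show (UpperHalfPlane.I).im = 1 from rfl]; exact hv1
      have : 1 < C := by
        rcases lt_or_eq_of_le hC1 with h | h
        · exact h
        · exfalso; apply hne
          rw [hC] at h
          field_simp at h
          nlinarith
      apply Real.sqrt_pos.mpr; nlinarith
    set x : ℝ := Real.arsinh S with hxdef
    have hsx : Real.sinh x = S := Real.sinh_arsinh S
    have hcx : Real.cosh x = C := by
      rw [hxdef, Real.cosh_arsinh]
      rw [show 1 + S ^ 2 = C ^ 2 by rw [hS2]; ring]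
      exact Real.sqrt_sq (by linarith)
    refine ⟨(u ^ 2 + v ^ 2 - 1) / (2 * v * S), u / (v * S), x, ?_, ?_, ?_⟩
    · have expand : (2 * v * S) ^ 2 = (u ^ 2 + v ^ 2 + 1) ^ 2 - 4 * v ^ 2 := by
        rw [show (2 * v * S) ^ 2 = 4 * v ^ 2 * S ^ 2 by ring, hS2, hC]
        field_simp
        ring
      field_simp
      nlinarith [expand]
    · rw [hxdef]; exact Real.arsinh_nonneg_iff.mpr (le_of_lt hSpos)
    · have hden : Real.cosh x - (u ^ 2 + v ^ 2 - 1) / (2 * v * S) * Real.sinh x = 1 / v := by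
        rw [hcx, hsx, hC]
        field_simp
        ring
      apply UpperHalfPlane.ext'
      · rw [zeta_re, hden, hsx, ← hu]
        field_simp
      · rw [zeta_im, hden, ← hv]
        simp

/-- Rigidity: a point between `I` and a point on a geodesic through `I` lies on that geodesic. -/
lemma rigid {k κ : ℝ} (hk : k ^ 2 + κ ^ 2 = 1) {x x₀ : ℝ} (hx₀ : 0 ≤ x₀) (hx : x₀ ≤ x)
    {z : ℍ} (h1 : dist UpperHalfPlane.I z = x₀)
    (h2 : dist z (zeta k κ hk x) = x - x₀) : z = zeta k κ hk x₀ := by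
  obtain ⟨j, ι, y, hj, hy0, rfl⟩ := exists_zeta z
  have hyx : y = x₀ := by rw [← dist_I_zeta hj hy0]; exact h1
  subst hyx
  rcases eq_or_lt_of_le hy0 with h0 | hypos
  · rw [← h0, zeta_zero, zeta_zero]
  · have hxpos : 0 < x := lt_of_lt_of_le hypos hx
    have hc := cosh_dist_zeta hj hk y x
    rw [h2] at hc
    have hsub : Real.cosh (x - y) = Real.cosh x * Real.cosh y - Real.sinh x * Real.sinh y :=
      Real.cosh_sub x y
    have hprod : (1 - (j * k + ι * κ)) * (Real.sinh y * Real.sinh x) = 0 := by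
      rw [show x - y = -(y - x) by ring, Real.cosh_neg] at hc
      rw [Real.cosh_sub] at hc
      linarith [hc]
    have hsy : 0 < Real.sinh y := Real.sinh_pos_iff.mpr hypos
    have hsx : 0 < Real.sinh x := Real.sinh_pos_iff.mpr hxpos
    have hone : j * k + ι * κ = 1 := by
      rcases mul_eq_zero.mp hprod with h | h
      · linarith
      · exfalso; exact (ne_of_gt (mul_pos hsy hsx)) h
    have hjk : j = k ∧ ι = κ := by
      constructor <;> nlinarith [sq_nonneg (j - k), sq_nonneg (ι - κ)]
    obtain ⟨rfl, rfl⟩ := hjk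
    rfl

/-- The core polynomial inequality. -/
lemma poly_ineq {A B C : ℝ} (h1 : 1 ≤ A) (hB : A ≤ B) (hC : A ≤ C) :
    0 ≤ A ^ 2 * B * C + 6 * A * B * C - 3 * B * C + 3 * A ^ 3 * B + 3 * A * B - 10 * A ^ 2 * B
      + 3 * A ^ 3 * C + 3 * A * C - 10 * A ^ 2 * C - 3 * A ^ 4 + 6 * A ^ 3 + A ^ 2 := by
  set α := A - 1 with hα
  set β := B - A with hβ
  set γ := C - A with hγ
  have hα0 : 0 ≤ α := by linarith
  have hβ0 : 0 ≤ β := by linarith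
  have hγ0 : 0 ≤ γ := by linarith
  have expand : A ^ 2 * B * C + 6 * A * B * C - 3 * B * C + 3 * A ^ 3 * B + 3 * A * B
      - 10 * A ^ 2 * B + 3 * A ^ 3 * C + 3 * A * C - 10 * A ^ 2 * C - 3 * A ^ 4 + 6 * A ^ 3 + A ^ 2
      = 4 * (β * γ) + 4 * (α * γ) + 4 * (α * β) + 8 * (α * β * γ) + 4 * α ^ 2
        + 8 * (α ^ 2 * γ) + 8 * (α ^ 2 * β) + α ^ 2 * β * γ + 8 * α ^ 3
        + 4 * (α ^ 3 * γ) + 4 * (α ^ 3 * β) + 4 * α ^ 4 := by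
    rw [hα, hβ, hγ]; ring
  rw [expand]
  positivity

/-- The key inequality behind `ln 3`-thinness. -/
lemma key_ineq_exp {a b c : ℝ} (ha : 1 ≤ a) (hb : a ≤ b) (hc : a ≤ c) :
    (((a + a⁻¹) / 2) ^ 2 - 5 / 3) * (((b - b⁻¹) / 2) * ((c - c⁻¹) / 2)) ≤
      ((a - a⁻¹) / 2) ^ 2 *
        (((b + b⁻¹) / 2) * ((c + c⁻¹) / 2) - (b * c / a ^ 2 + (b * c / a ^ 2)⁻¹) / 2) := by
  have ha0 : (0 : ℝ) < a := by linarith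
  have hb0 : (0 : ℝ) < b := by linarith
  have hc0 : (0 : ℝ) < c := by linarith
  have hQ := poly_ineq (A := a ^ 2) (B := b ^ 2) (C := c ^ 2)
    (by nlinarith) (by nlinarith) (by nlinarith)
  rw [← sub_nonneg]
  have hid : (((a - a⁻¹) / 2) ^ 2 *
        (((b + b⁻¹) / 2) * ((c + c⁻¹) / 2) - (b * c / a ^ 2 + (b * c / a ^ 2)⁻¹) / 2)
      - (((a + a⁻¹) / 2) ^ 2 - 5 / 3) * (((b - b⁻¹) / 2) * ((c - c⁻¹) / 2)))
      * (24 * a ^ 4 * b * c)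
      = (a ^ 2) ^ 2 * b ^ 2 * c ^ 2 + 6 * (a ^ 2) * b ^ 2 * c ^ 2 - 3 * b ^ 2 * c ^ 2
        + 3 * (a ^ 2) ^ 3 * b ^ 2 + 3 * (a ^ 2) * b ^ 2 - 10 * (a ^ 2) ^ 2 * b ^ 2
        + 3 * (a ^ 2) ^ 3 * c ^ 2 + 3 * (a ^ 2) * c ^ 2 - 10 * (a ^ 2) ^ 2 * c ^ 2
        - 3 * (a ^ 2) ^ 4 + 6 * (a ^ 2) ^ 3 + (a ^ 2) ^ 2 := by
    field_simp
    ring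
  have h24 : (0 : ℝ) < 24 * a ^ 4 * b * c := by positivity
  nlinarith [hid, hQ, h24, mul_pos (mul_pos (by positivity : (0:ℝ) < 24 * a ^ 4) hb0) hc0]

lemma key_ineq {s D T : ℝ} (hs : 0 < s) (hD : s ≤ D) (hT : s ≤ T) :
    (Real.cosh s ^ 2 - 5 / 3) * (Real.sinh D * Real.sinh T) ≤
      Real.sinh s ^ 2 * (Real.cosh D * Real.cosh T - Real.cosh (D + T - 2 * s)) := by
  have h1 : Real.exp (-s) = (Real.exp s)⁻¹ := Real.exp_neg s
  have h2 : Real.exp (-D) = (Real.exp D)⁻¹ := Real.exp_neg D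
  have h3 : Real.exp (-T) = (Real.exp T)⁻¹ := Real.exp_neg T
  have h4 : Real.exp (D + T - 2 * s) = Real.exp D * Real.exp T / (Real.exp s) ^ 2 := by
    rw [Real.exp_sub, Real.exp_add, show (2 : ℝ) * s = s + s by ring, Real.exp_add, sq]
  have h5 : Real.exp (-(D + T - 2 * s)) = (Real.exp D * Real.exp T / (Real.exp s) ^ 2)⁻¹ := by
    rw [Real.exp_neg, h4]
  have := key_ineq_exp (a := Real.exp s) (b := Real.exp D) (c := Real.exp T)
    (Real.one_lt_exp_iff.mpr hs).le (Real.exp_le_exp.mpr hD) (Real.exp_le_exp.mpr hT)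
  rw [Real.cosh_eq, Real.cosh_eq, Real.cosh_eq, Real.cosh_eq, Real.sinh_eq, Real.sinh_eq,
    Real.sinh_eq, h1, h2, h3, h4, h5]
  exact this


/-- Main geometric lemma, normalized at `I`: if `p` and `q` lie at equal distance `s`
from `I` on geodesics towards `b` and `c` respectively, and `s` is at most the Gromov
product `(b|c)_I`, then `cosh (dist p q) ≤ 5/3`. -/
lemma main_I (p b q c : ℍ) (s : ℝ) (hs : 0 ≤ s)
    (hip : dist UpperHalfPlane.I p = s) (hpb : dist p b = dist UpperHalfPlane.I b - s)
    (hiq : dist UpperHalfPlane.I q = s) (hqc : dist q c = dist UpperHalfPlane.I c - s)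
    (hG : 2 * s ≤ dist UpperHalfPlane.I b + dist UpperHalfPlane.I c - dist b c) :
    Real.cosh (dist p q) ≤ 5 / 3 := by
  rcases eq_or_lt_of_le hs with h0 | hspos
  · have hp : UpperHalfPlane.I = p := dist_eq_zero.mp (by rw [hip, ← h0])
    have hq : UpperHalfPlane.I = q := dist_eq_zero.mp (by rw [hiq, ← h0])
    rw [← hp, ← hq, dist_self, Real.cosh_zero]; norm_num
  · have hsD : s ≤ dist UpperHalfPlane.I b := by
      have := dist_nonneg (x := p) (y := b); linarith [hpb]
    have hsT : s ≤ dist UpperHalfPlane.I c := by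
      have := dist_nonneg (x := q) (y := c); linarith [hqc]
    obtain ⟨l, lam, xb, hl, hxb0, rfl⟩ := exists_zeta b
    obtain ⟨m, mu, xc, hm, hxc0, rfl⟩ := exists_zeta c
    have hDb : dist UpperHalfPlane.I (zeta l lam hl xb) = xb := dist_I_zeta hl hxb0
    have hDc : dist UpperHalfPlane.I (zeta m mu hm xc) = xc := dist_I_zeta hm hxc0
    rw [hDb] at hpb hsD
    rw [hDc] at hqc hsT
    have hp : p = zeta l lam hl s := rigid hl hs hsD hip hpb
    have hq : q = zeta m mu hm s := rigid hm hs hsT hiq hqc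
    rw [hDb, hDc] at hG
    subst hp; subst hq
    rw [cosh_dist_zeta hl hm s s]
    set κ := l * m + lam * mu with hκ
    have hbc : dist (zeta l lam hl xb) (zeta m mu hm xc) ≤ xb + xc - 2 * s := by linarith
    have hcosh : Real.cosh (dist (zeta l lam hl xb) (zeta m mu hm xc)) ≤
        Real.cosh (xb + xc - 2 * s) := by
      apply Real.cosh_le_cosh.mpr
      rw [abs_of_nonneg dist_nonneg, abs_of_nonneg (by linarith : (0:ℝ) ≤ xb + xc - 2 * s)]
      exact hbc
    rw [cosh_dist_zeta hl hm xb xc, ← hκ] at hcosh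
    have hks := key_ineq hspos hsD hsT
    have hsbc : 0 < Real.sinh xb * Real.sinh xc :=
      mul_pos (Real.sinh_pos_iff.mpr (lt_of_lt_of_le hspos hsD))
        (Real.sinh_pos_iff.mpr (lt_of_lt_of_le hspos hsT))
    -- κ * (sinh xb * sinh xc) ≥ cosh xb * cosh xc - cosh (xb + xc - 2 s)
    have hlow : Real.cosh xb * Real.cosh xc - Real.cosh (xb + xc - 2 * s) ≤
        κ * (Real.sinh xb * Real.sinh xc) := by linarith
    have hfin : (Real.cosh s ^ 2 - 5 / 3) * (Real.sinh xb * Real.sinh xc) ≤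
        Real.sinh s ^ 2 * (κ * (Real.sinh xb * Real.sinh xc)) := by
      calc (Real.cosh s ^ 2 - 5 / 3) * (Real.sinh xb * Real.sinh xc)
          ≤ Real.sinh s ^ 2 * (Real.cosh xb * Real.cosh xc - Real.cosh (xb + xc - 2 * s)) := hks
        _ ≤ Real.sinh s ^ 2 * (κ * (Real.sinh xb * Real.sinh xc)) := by
            apply mul_le_mul_of_nonneg_left hlow (sq_nonneg _)
    have : Real.cosh s ^ 2 - 5 / 3 ≤ Real.sinh s ^ 2 * κ := by
      have := (mul_le_mul_iff_of_pos_right hsbc).mp (by linarith [hfin] :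
        (Real.cosh s ^ 2 - 5 / 3) * (Real.sinh xb * Real.sinh xc) ≤
          (Real.sinh s ^ 2 * κ) * (Real.sinh xb * Real.sinh xc))
      linarith
    nlinarith [this]

/-- Affine renormalization sending `a` to `I`. -/
def renorm (a : ℍ) (z : ℍ) : ℍ :=
  ⟨⟨(z.re - a.re) / a.im, z.im / a.im⟩, by
    have := z.im_pos; have := a.im_pos; positivity⟩

@[simp] lemma renorm_re (a z : ℍ) : (renorm a z).re = (z.re - a.re) / a.im := rfl
@[simp] lemma renorm_im (a z : ℍ) : (renorm a z).im = z.im / a.im := rfl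

lemma renorm_self (a : ℍ) : renorm a a = UpperHalfPlane.I := by
  apply UpperHalfPlane.ext'
  · rw [renorm_re, show (UpperHalfPlane.I).re = 0 from rfl, sub_self, zero_div]
  · rw [renorm_im, show (UpperHalfPlane.I).im = 1 from rfl, div_self (ne_of_gt a.im_pos)]

lemma dist_renorm (a z w : ℍ) : dist (renorm a z) (renorm a w) = dist z w := by
  have hz := z.im_pos
  have hw := w.im_pos
  have ha := a.im_pos
  have h1 : Real.cosh (dist (renorm a z) (renorm a w)) = Real.cosh (dist z w) := by
    rw [UpperHalfPlane.cosh_dist', UpperHalfPlane.cosh_dist', renorm_re, renorm_re,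
      renorm_im, renorm_im]
    rw [div_eq_div_iff (by positivity) (by positivity)]
    field_simp
    ring
  exact le_antisymm
    (by
      have := Real.cosh_le_cosh.mp (le_of_eq h1)
      rwa [abs_of_nonneg dist_nonneg, abs_of_nonneg dist_nonneg] at this)
    (by
      have := Real.cosh_le_cosh.mp (ge_of_eq h1)
      rwa [abs_of_nonneg dist_nonneg, abs_of_nonneg dist_nonneg] at this)

/-- Main geometric lemma: tripod comparison at a vertex. -/
lemma main_lemma (a p b q c : ℍ) (s : ℝ) (hs : 0 ≤ s)
    (hap : dist a p = s) (hpb : dist p b = dist a b - s)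
    (haq : dist a q = s) (hqc : dist q c = dist a c - s)
    (hG : 2 * s ≤ dist a b + dist a c - dist b c) :
    dist p q ≤ Real.log 3 := by
  have hmain := main_I (renorm a p) (renorm a b) (renorm a q) (renorm a c) s hs
    (by rw [← renorm_self a, dist_renorm]; exact hap)
    (by rw [dist_renorm, ← renorm_self a, dist_renorm]; exact hpb)
    (by rw [← renorm_self a, dist_renorm]; exact haq)
    (by rw [dist_renorm, ← renorm_self a, dist_renorm]; exact hqc)
    (by rw [dist_renorm, ← renorm_self a, dist_renorm, dist_renorm]; exact hG)
  rw [dist_renorm] at hmain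
  have h53 : Real.cosh (Real.log 3) = 5 / 3 := by
    rw [Real.cosh_log (by norm_num : (0:ℝ) < 3)]; norm_num
  have h2 : Real.cosh (dist p q) ≤ Real.cosh (Real.log 3) := by rw [h53]; exact hmain
  have := Real.cosh_le_cosh.mp h2
  rwa [abs_of_nonneg dist_nonneg,
    abs_of_nonneg (Real.log_nonneg (by norm_num : (1:ℝ) ≤ 3))] at this


section Assembly

lemma side_bound (a b c : ℍ) (γab γbc γca : ℝ → ℍ)
    (hab : IsGeodesicSegment γab a b) (hbc : IsGeodesicSegment γbc b c)
    (hca : IsGeodesicSegment γca c a) :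
    ∀ s ∈ Set.Icc (0 : ℝ) (dist a b),
      Metric.infDist (γab s)
        (γbc '' Set.Icc 0 (dist b c) ∪ γca '' Set.Icc 0 (dist c a)) ≤ Real.log 3 := by
  intro s hs
  obtain ⟨hs0, hs1⟩ := hs
  obtain ⟨hab0, hab1, habd⟩ := hab
  obtain ⟨hbc0, hbc1, hbcd⟩ := hbc
  obtain ⟨hca0, hca1, hcad⟩ := hca
  have e1 : dist c b = dist b c := dist_comm c b
  have e2 : dist c a = dist a c := dist_comm c a
  have e3 : dist b a = dist a b := dist_comm b a
  have htri1 : dist a b ≤ dist a c + dist c b := dist_triangle a c b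
  have hap : dist a (γab s) = s := by
    rw [← hab0, habd 0 ⟨le_rfl, dist_nonneg⟩ s ⟨hs0, hs1⟩, zero_sub, abs_neg, abs_of_nonneg hs0]
  have hpb : dist (γab s) b = dist a b - s := by
    have h := habd s ⟨hs0, hs1⟩ (dist a b) ⟨dist_nonneg, le_rfl⟩
    rw [hab1] at h
    rw [h, abs_of_nonpos (by linarith), neg_sub]
  by_cases hcase : 2 * s ≤ dist a b + dist a c - dist b c
  · -- compare with the side from `a` to `c`
    have hsca : s ≤ dist c a := by linarith
    have hmem : γca (dist c a - s) ∈
        γbc '' Set.Icc 0 (dist b c) ∪ γca '' Set.Icc 0 (dist c a) :=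
      Or.inr ⟨dist c a - s, ⟨by linarith, by linarith⟩, rfl⟩
    have haq : dist a (γca (dist c a - s)) = s := by
      have h := hcad (dist c a) ⟨dist_nonneg, le_rfl⟩ (dist c a - s) ⟨by linarith, by linarith⟩
      rw [hca1] at h
      rw [h, show dist c a - (dist c a - s) = s by ring, abs_of_nonneg hs0]
    have hqc : dist (γca (dist c a - s)) c = dist a c - s := by
      have h := hcad (dist c a - s) ⟨by linarith, by linarith⟩ 0 ⟨le_rfl, dist_nonneg⟩
      rw [hca0] at h
      rw [h, sub_zero, abs_of_nonneg (by linarith), e2]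
    have hdq := main_lemma a (γab s) b (γca (dist c a - s)) c s hs0 hap hpb haq hqc hcase
    exact le_trans (Metric.infDist_le_dist_of_mem hmem) hdq
  · -- compare with the side from `b` to `c`
    push_neg at hcase
    have hsbc : dist a b - s ≤ dist b c := by linarith
    have hmem : γbc (dist a b - s) ∈
        γbc '' Set.Icc 0 (dist b c) ∪ γca '' Set.Icc 0 (dist c a) :=
      Or.inl ⟨dist a b - s, ⟨by linarith, hsbc⟩, rfl⟩
    have hbp : dist b (γab s) = dist a b - s := by rw [dist_comm]; exact hpb
    have hpa : dist (γab s) a = dist b a - (dist a b - s) := by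
      rw [dist_comm, hap, e3]; ring
    have hbq : dist b (γbc (dist a b - s)) = dist a b - s := by
      have h := hbcd 0 ⟨le_rfl, dist_nonneg⟩ (dist a b - s) ⟨by linarith, hsbc⟩
      rw [hbc0] at h
      rw [h, zero_sub, abs_neg, abs_of_nonneg (by linarith)]
    have hqc : dist (γbc (dist a b - s)) c = dist b c - (dist a b - s) := by
      have h := hbcd (dist a b - s) ⟨by linarith, hsbc⟩ (dist b c) ⟨dist_nonneg, le_rfl⟩
      rw [hbc1] at h
      rw [h, abs_of_nonpos (by linarith), neg_sub]
    have hG : 2 * (dist a b - s) ≤ dist b a + dist b c - dist a c := by linarith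
    have hdq := main_lemma b (γab s) a (γbc (dist a b - s)) c (dist a b - s)
      (by linarith) hbp hpa hbq hqc hG
    exact le_trans (Metric.infDist_le_dist_of_mem hmem) hdq

end Assembly

end HypThin

end

/-- **The hyperbolic plane is `ln 3`-thin.** In the upper half-plane
`ℍ = {z ∈ ℂ : Im z > 0}` with the hyperbolic distance — characterized by
`cosh (dist z w) = 1 + |z − w|² / (2 · Im z · Im w)` — every geodesic triangle is
`ln 3`-thin. -/
theorem hyperbolic_plane_thin_triangles :
    (∀ z w : UpperHalfPlane, Real.cosh (dist z w) =
      1 + ‖(z : ℂ) - (w : ℂ)‖ ^ 2 / (2 * z.im * w.im)) ∧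
    ThinTriangles UpperHalfPlane (Real.log 3) := by
  constructor
  · intro z w
    rw [UpperHalfPlane.cosh_dist, Complex.dist_eq]
  · intro a b c γab γbc γca hab hbc hca
    refine ⟨HypThin.side_bound a b c γab γbc γca hab hbc hca, ?_, ?_⟩
    · intro s hs
      have h := HypThin.side_bound b c a γbc γca γab hbc hca hab s hs
      rwa [Set.union_comm] at h
    · intro s hs
      exact HypThin.side_bound c a b γca γab γbc hca hab hbc s hs
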